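/- With the multi-band setup below, assume additionally that λ l > 0 for every l : Fin N. Then for every α ∈ [0,1] the family of normalized path states (Ψ_l(α))_{l : Fin N}, where Ψ_l(α) := N_l(α)⁻¹ • w l α and N_l(α) := Real.sqrt((1-α)² + α(2-α)·λ l), is an orthonormal family in E. -/

import Mathlib

open scoped InnerProductSpace ComplexConjugate Matrix

/-- If all the eigenvalues `λ l` of `F Fᴴ` are positive, then for every `α ∈ [0,1]` the
normalized path states `Ψ_l(α) := N_l(α)⁻¹ • w l α`, with
`N_l(α) := √((1-α)² + α(2-α)·λ l)`, form an orthonormal family. -/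
theorem multiband_path_orthonormal {E : Type*} [NormedAddCommGroup E] [InnerProductSpace ℂ E]
    {N : ℕ} (hN : 1 ≤ N) (ψ ψ' : Fin N → E)
    (hψ : Orthonormal ℂ ψ) (hψ' : Orthonormal ℂ ψ')
    (F U : Matrix (Fin N) (Fin N) ℂ)
    (hF : ∀ n m, F n m = ⟪ψ n, ψ' m⟫_ℂ)
    (hU : U ∈ Matrix.unitaryGroup (Fin N) ℂ)
    (lam : Fin N → ℝ)
    (hdiag : U * F * Fᴴ * Uᴴ = Matrix.diagonal (fun l => (lam l : ℂ)))
    (hpos : ∀ l, 0 < lam l)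
    (w : Fin N → ℝ → E)
    (hw : ∀ l (α : ℝ), w l α =
      ((1 - α : ℝ) : ℂ) • (∑ n, conj (U l n) • ψ n) +
        ((α : ℝ) : ℂ) • (∑ n, ∑ m, (conj (U l n) * conj (F n m)) • ψ' m)) :
    ∀ α ∈ Set.Icc (0 : ℝ) 1,
      Orthonormal ℂ (fun l =>
        (Real.sqrt ((1 - α) ^ 2 + α * (2 - α) * lam l))⁻¹ • w l α) := by
  intro α hα
  set V := U * F with hV
  have hUU : U * Uᴴ = 1 := by
    have := (Matrix.mem_unitaryGroup_iff.mp hU)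
    simpa [Matrix.star_eq_conjTranspose] using this
  have hVV : V * Vᴴ = Matrix.diagonal (fun l => (lam l : ℂ)) := by
    rw [show Vᴴ = Fᴴ * Uᴴ by rw [hV, Matrix.conjTranspose_mul], ← Matrix.mul_assoc]
    exact hdiag
  have helper : ∀ (φ φ' : Fin N → E) (c d : Fin N → ℂ),
      ⟪∑ n, c n • φ n, ∑ m, d m • φ' m⟫_ℂ
        = ∑ n, ∑ m, conj (c n) * d m * ⟪φ n, φ' m⟫_ℂ := by
    intro φ φ' c d
    rw [sum_inner]
    refine Finset.sum_congr rfl fun n _ => ?_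
    rw [inner_smul_left, inner_sum, Finset.mul_sum]
    refine Finset.sum_congr rfl fun m _ => ?_
    rw [inner_smul_right]
    ring
  have hS2 : ∀ k, (∑ n, ∑ m, (conj (U k n) * conj (F n m)) • ψ' m)
      = ∑ m, conj (V k m) • ψ' m := by
    intro k
    rw [Finset.sum_comm]
    refine Finset.sum_congr rfl fun m _ => ?_
    rw [← Finset.sum_smul]
    congr 1
    rw [hV, Matrix.mul_apply, map_sum]
    exact Finset.sum_congr rfl fun n _ => by rw [map_mul]
  have hψite := orthonormal_iff_ite.mp hψ
  have hψ'ite := orthonormal_iff_ite.mp hψ'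
  have hA : ∀ l k, ⟪∑ n, conj (U l n) • ψ n, ∑ n, conj (U k n) • ψ n⟫_ℂ
      = if l = k then 1 else 0 := by
    intro l k
    rw [helper]
    have h := congrFun (congrFun hUU l) k
    simp only [Matrix.mul_apply, Matrix.conjTranspose_apply, Matrix.one_apply,
      RCLike.star_def] at h
    calc ∑ n, ∑ m, conj (conj (U l n)) * conj (U k m) * ⟪ψ n, ψ m⟫_ℂ
        = ∑ n, U l n * conj (U k n) := by
          refine Finset.sum_congr rfl fun n _ => ?_
          simp [hψite, mul_ite, starRingEnd_self_apply]
      _ = if l = k then 1 else 0 := h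
  have hD : ∀ l k, ⟪∑ m, conj (V l m) • ψ' m, ∑ m, conj (V k m) • ψ' m⟫_ℂ
      = if l = k then (lam l : ℂ) else 0 := by
    intro l k
    rw [helper]
    have h := congrFun (congrFun hVV l) k
    simp only [Matrix.mul_apply, Matrix.conjTranspose_apply, Matrix.diagonal_apply,
      RCLike.star_def] at h
    calc ∑ m, ∑ m', conj (conj (V l m)) * conj (V k m') * ⟪ψ' m, ψ' m'⟫_ℂ
        = ∑ m, V l m * conj (V k m) := by
          refine Finset.sum_congr rfl fun m _ => ?_
          simp [hψ'ite, mul_ite, starRingEnd_self_apply]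
      _ = if l = k then (lam l : ℂ) else 0 := h
  have hB : ∀ l k, ⟪∑ n, conj (U l n) • ψ n, ∑ m, conj (V k m) • ψ' m⟫_ℂ
      = if l = k then (lam l : ℂ) else 0 := by
    intro l k
    rw [helper]
    have h := congrFun (congrFun hVV l) k
    simp only [Matrix.mul_apply, Matrix.conjTranspose_apply, Matrix.diagonal_apply,
      RCLike.star_def] at h
    calc ∑ n, ∑ m, conj (conj (U l n)) * conj (V k m) * ⟪ψ n, ψ' m⟫_ℂ
        = ∑ m, ∑ n, U l n * F n m * conj (V k m) := by
          rw [Finset.sum_comm]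
          refine Finset.sum_congr rfl fun m _ => Finset.sum_congr rfl fun n _ => ?_
          rw [← hF n m, starRingEnd_self_apply]
          ring
      _ = ∑ m, V l m * conj (V k m) := by
          refine Finset.sum_congr rfl fun m _ => ?_
          rw [hV, Matrix.mul_apply, Matrix.mul_apply, Finset.sum_mul]
      _ = if l = k then (lam l : ℂ) else 0 := h
  have hC : ∀ l k, ⟪∑ m, conj (V l m) • ψ' m, ∑ n, conj (U k n) • ψ n⟫_ℂ
      = if l = k then (lam l : ℂ) else 0 := by
    intro l k
    rw [← inner_conj_symm, hB]
    rcases eq_or_ne l k with h | h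
    · subst h; simp
    · simp [h, Ne.symm h]
  have hinner : ∀ l k, ⟪w l α, w k α⟫_ℂ
      = if l = k then (((1 - α) ^ 2 + α * (2 - α) * lam l : ℝ) : ℂ) else 0 := by
    intro l k
    rw [hw l α, hw k α, hS2 l, hS2 k]
    simp only [inner_add_left, inner_add_right, inner_smul_left, inner_smul_right,
      Complex.conj_ofReal, hA l k, hB l k, hC l k, hD l k]
    rcases eq_or_ne l k with h | h
    · subst h
      simp only [if_pos rfl]
      push_cast
      ring
    · simp [h]
  rw [orthonormal_iff_ite]
  intro l k
  have hX : ∀ j, (0 : ℝ) < (1 - α) ^ 2 + α * (2 - α) * lam j := by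
    intro j
    rcases eq_or_lt_of_le hα.2 with h1 | h1
    · subst h1
      norm_num [hpos j]
    · have h2 : (0 : ℝ) < (1 - α) ^ 2 := pow_pos (by linarith) 2
      have h3 : (0 : ℝ) ≤ α * (2 - α) * lam j :=
        mul_nonneg (mul_nonneg hα.1 (by linarith)) (hpos j).le
      linarith
  simp only [← Complex.coe_smul, inner_smul_left, inner_smul_right,
    Complex.conj_ofReal, hinner l k]
  rcases eq_or_ne l k with h | h
  · subst h
    simp only [if_true]
    have hXl := hX l
    have hs : Real.sqrt ((1 - α) ^ 2 + α * (2 - α) * lam l) ≠ 0 :=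
      (Real.sqrt_pos.mpr hXl).ne'
    have hr : (Real.sqrt ((1 - α) ^ 2 + α * (2 - α) * lam l))⁻¹ *
        ((Real.sqrt ((1 - α) ^ 2 + α * (2 - α) * lam l))⁻¹ *
          ((1 - α) ^ 2 + α * (2 - α) * lam l)) = 1 := by
      field_simp
      rw [Real.sq_sqrt hXl.le]
    exact_mod_cast hr
  · simp [h]
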